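/- (Decoupled SDP relaxation implies the coupled LMI) Let λ₁, …, λₘ ≥ 0 with Σ_{i=1}^m λᵢ > 0, and suppose the (n+1)×(n+1) block matrix M(λ) is positive semidefinite. Define P₀ = (Σ_{i=1}^m λᵢPᵢ⁻¹)⁻¹ (which exists since Σᵢ λᵢPᵢ⁻¹ is positive definite) and x̃₀ = Σ_{i=1}^m λᵢPᵢ⁻¹xᵢ. Then the (n+1)×(n+1) block matrix N(P₀, x̃₀, λ) is positive semidefinite. -/

import Mathlib

open Matrix

lemma sum_mulVec' {n m : ℕ} (A : Fin m → Matrix (Fin n) (Fin n) ℝ) (v : Fin n → ℝ) :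
    (∑ i, A i) *ᵥ v = ∑ i, A i *ᵥ v := by
  ext j
  simp only [Matrix.mulVec, dotProduct, Finset.sum_apply, Matrix.sum_apply,
    Finset.sum_mul]
  exact Finset.sum_comm

lemma dotProduct_sum' {n m : ℕ} (w : Fin n → ℝ) (f : Fin m → (Fin n → ℝ)) :
    w ⬝ᵥ (∑ i, f i) = ∑ i, w ⬝ᵥ f i := by
  simp only [dotProduct, Finset.sum_apply, Finset.mul_sum]
  exact Finset.sum_comm

lemma sumA_posDef {n m : ℕ}
    (P : Fin m → Matrix (Fin n) (Fin n) ℝ)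
    (hP : ∀ i, (P i).PosDef)
    (lam : Fin m → ℝ) (hlam : ∀ i, 0 ≤ lam i) (hlampos : 0 < ∑ i, lam i) :
    (∑ i, lam i • (P i)⁻¹).PosDef := by
  obtain ⟨j, -, hj⟩ := Finset.exists_lt_of_sum_lt
    (by simpa using hlampos : ∑ i : Fin m, (0:ℝ) < ∑ i, lam i)
  refine Matrix.PosDef.of_dotProduct_mulVec_pos ?_ ?_
  · unfold Matrix.IsHermitian
    rw [conjTranspose_sum]
    refine Finset.sum_congr rfl fun i _ => ?_
    rw [conjTranspose_smul, (hP i).inv.isHermitian, star_trivial]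
  · intro v hv
    have key : star v ⬝ᵥ (∑ i, lam i • (P i)⁻¹) *ᵥ v
        = ∑ i, lam i * (star v ⬝ᵥ (P i)⁻¹ *ᵥ v) := by
      rw [sum_mulVec', dotProduct_sum']
      refine Finset.sum_congr rfl fun i _ => ?_
      rw [Matrix.smul_mulVec, dotProduct_smul, smul_eq_mul]
    rw [key]
    exact Finset.sum_pos' (fun i _ => mul_nonneg (hlam i) (le_of_lt ((hP i).inv.dotProduct_mulVec_pos hv)))
      ⟨j, Finset.mem_univ j, mul_pos hj ((hP j).inv.dotProduct_mulVec_pos hv)⟩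

lemma row_mul_mul_col {n : ℕ} (u v : Fin n → ℝ) (B : Matrix (Fin n) (Fin n) ℝ) :
    (Matrix.replicateRow Unit u * B * Matrix.replicateCol Unit v) () () = u ⬝ᵥ B *ᵥ v := by
  simp [Matrix.mul_apply, Matrix.replicateRow, Matrix.replicateCol, Matrix.mulVec, dotProduct,
    Finset.sum_mul, Finset.mul_sum, mul_assoc]
  exact Finset.sum_comm


/-- The symmetric `(n+1) × (n+1)` block matrix `M(λ)` of the decoupled SDP relaxation:
`[[1 - Σᵢλᵢ + ΣᵢλᵢxᵢᵀPᵢ⁻¹xᵢ, (ΣᵢλᵢPᵢ⁻¹xᵢ)ᵀ], [ΣᵢλᵢPᵢ⁻¹xᵢ, ΣᵢλᵢPᵢ⁻¹]]`. -/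
noncomputable def decoupledBlockM {n m : ℕ} (x : Fin m → (Fin n → ℝ))
    (P : Fin m → Matrix (Fin n) (Fin n) ℝ) (lam : Fin m → ℝ) :
    Matrix (Unit ⊕ Fin n) (Unit ⊕ Fin n) ℝ :=
  Matrix.fromBlocks
    (Matrix.of fun _ _ => 1 - (∑ i, lam i) + ∑ i, lam i * (x i ⬝ᵥ ((P i)⁻¹ *ᵥ x i)))
    (Matrix.replicateRow Unit (∑ i, lam i • ((P i)⁻¹ *ᵥ x i)))
    (Matrix.replicateCol Unit (∑ i, lam i • ((P i)⁻¹ *ᵥ x i)))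
    (∑ i, lam i • (P i)⁻¹)

/-- The symmetric `(n+1) × (n+1)` block matrix `N(P₀, x̃₀, λ)`:
`[[Σᵢ λᵢ Pᵢ⁻¹ - P₀⁻¹, x̃₀ - Σᵢ λᵢ Pᵢ⁻¹xᵢ],
  [(x̃₀ - Σᵢ λᵢ Pᵢ⁻¹xᵢ)ᵀ, 1 + Σᵢ λᵢ(xᵢᵀPᵢ⁻¹xᵢ - 1) - x̃₀ᵀP₀x̃₀]]`. -/
noncomputable def sdpBlockN {n m : ℕ} (x : Fin m → (Fin n → ℝ))
    (P : Fin m → Matrix (Fin n) (Fin n) ℝ)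
    (P₀ : Matrix (Fin n) (Fin n) ℝ) (xt : Fin n → ℝ) (lam : Fin m → ℝ) :
    Matrix (Fin n ⊕ Unit) (Fin n ⊕ Unit) ℝ :=
  Matrix.fromBlocks
    ((∑ i, lam i • (P i)⁻¹) - P₀⁻¹)
    (Matrix.replicateCol Unit (xt - ∑ i, lam i • ((P i)⁻¹ *ᵥ x i)))
    (Matrix.replicateRow Unit (xt - ∑ i, lam i • ((P i)⁻¹ *ᵥ x i)))
    (Matrix.of fun _ _ =>
      1 + (∑ i, lam i * (x i ⬝ᵥ ((P i)⁻¹ *ᵥ x i) - 1)) - xt ⬝ᵥ (P₀ *ᵥ xt))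

/-- (Decoupled SDP relaxation implies the coupled LMI) If `M(λ)` is positive semidefinite and
we set `P₀ = (Σᵢ λᵢPᵢ⁻¹)⁻¹` and `x̃₀ = Σᵢ λᵢPᵢ⁻¹xᵢ`, then `N(P₀, x̃₀, λ)` is positive
semidefinite. -/
theorem decoupled_implies_coupled (n m : ℕ) (hn : 0 < n) (hm : 0 < m)
    (x : Fin m → (Fin n → ℝ)) (P : Fin m → Matrix (Fin n) (Fin n) ℝ)
    (hP : ∀ i, (P i).PosDef)
    (lam : Fin m → ℝ) (hlam : ∀ i, 0 ≤ lam i) (hlampos : 0 < ∑ i, lam i)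
    (hM : (decoupledBlockM x P lam).PosSemidef)
    (P₀ : Matrix (Fin n) (Fin n) ℝ) (hP₀ : P₀ = (∑ i, lam i • (P i)⁻¹)⁻¹)
    (xt : Fin n → ℝ) (hxt : xt = ∑ i, lam i • ((P i)⁻¹ *ᵥ x i)) :
    (sdpBlockN x P P₀ xt lam).PosSemidef := by
  have hA := sumA_posDef P hP lam hlam hlampos
  haveI : Invertible (∑ i, lam i • (P i)⁻¹) := hA.isUnit.invertible
  have hP₀inv : P₀⁻¹ = ∑ i, lam i • (P i)⁻¹ := by
    rw [hP₀]
    exact Matrix.nonsing_inv_nonsing_inv _ hA.det_pos.ne'.isUnit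
  -- rewrite M and extract Schur complement
  have hcol : Matrix.replicateCol Unit xt = (Matrix.replicateRow Unit xt)ᴴ := by
    rw [conjTranspose_replicateRow, star_trivial]
  have hMeq : decoupledBlockM x P lam =
      Matrix.fromBlocks
        (Matrix.of fun _ _ => 1 - (∑ i, lam i) + ∑ i, lam i * (x i ⬝ᵥ ((P i)⁻¹ *ᵥ x i)))
        (Matrix.replicateRow Unit xt) (Matrix.replicateRow Unit xt)ᴴ (∑ i, lam i • (P i)⁻¹) := by
    rw [decoupledBlockM, ← hcol, ← hxt]
  rw [hMeq] at hM
  have hschur := (Matrix.PosDef.fromBlocks₂₂ _ _ hA).mp hM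
  have hc0 := hschur.dotProduct_mulVec_nonneg (fun _ => (1:ℝ))
  have hentry : star (fun _ => (1:ℝ)) ⬝ᵥ
      (((Matrix.of fun _ _ => 1 - (∑ i, lam i) + ∑ i, lam i * (x i ⬝ᵥ ((P i)⁻¹ *ᵥ x i)))
        - Matrix.replicateRow Unit xt * (∑ i, lam i • (P i)⁻¹)⁻¹ * (Matrix.replicateRow Unit xt)ᴴ)
        *ᵥ fun _ => (1:ℝ)) =
      (1 - (∑ i, lam i) + ∑ i, lam i * (x i ⬝ᵥ ((P i)⁻¹ *ᵥ x i)))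
        - xt ⬝ᵥ (∑ i, lam i • (P i)⁻¹)⁻¹ *ᵥ xt := by
    rw [← hcol]
    simp [dotProduct, Matrix.mulVec, Matrix.sub_apply, Fintype.sum_unique,
      ← row_mul_mul_col xt xt]
    rw [row_mul_mul_col]
    simp [Matrix.mulVec, dotProduct]
  rw [hentry] at hc0
  -- the scalar of N is nonneg
  have hc : 0 ≤ 1 + (∑ i, lam i * (x i ⬝ᵥ ((P i)⁻¹ *ᵥ x i) - 1)) - xt ⬝ᵥ (P₀ *ᵥ xt) := by
    have : ∑ i, lam i * (x i ⬝ᵥ ((P i)⁻¹ *ᵥ x i) - 1)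
        = (∑ i, lam i * (x i ⬝ᵥ ((P i)⁻¹ *ᵥ x i))) - ∑ i, lam i := by
      rw [← Finset.sum_sub_distrib]
      exact Finset.sum_congr rfl fun i _ => by ring
    rw [this, hP₀]
    linarith [hc0]
  -- N equals a simple block matrix
  have hNeq : sdpBlockN x P P₀ xt lam =
      Matrix.fromBlocks 0 (Matrix.replicateCol Unit 0) (Matrix.replicateRow Unit 0)
        (Matrix.of fun _ _ =>
          1 + (∑ i, lam i * (x i ⬝ᵥ ((P i)⁻¹ *ᵥ x i) - 1)) - xt ⬝ᵥ (P₀ *ᵥ xt)) := by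
    rw [sdpBlockN, hP₀inv, ← hxt]
    simp
  rw [hNeq]
  refine Matrix.PosSemidef.of_dotProduct_mulVec_nonneg ?_ ?_
  · show _ = _
    ext a b
    cases a <;> cases b <;>
      simp [Matrix.fromBlocks, Matrix.conjTranspose_apply, Matrix.replicateRow, Matrix.replicateCol]
  · intro y
    have hy : star y ⬝ᵥ
        (Matrix.fromBlocks 0 (Matrix.replicateCol Unit 0) (Matrix.replicateRow Unit 0)
          (Matrix.of fun _ _ =>
            1 + (∑ i, lam i * (x i ⬝ᵥ ((P i)⁻¹ *ᵥ x i) - 1)) - xt ⬝ᵥ (P₀ *ᵥ xt)) *ᵥ y)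
        = (1 + (∑ i, lam i * (x i ⬝ᵥ ((P i)⁻¹ *ᵥ x i) - 1)) - xt ⬝ᵥ (P₀ *ᵥ xt))
          * (y (Sum.inr ()) * y (Sum.inr ())) := by
      simp [dotProduct, Matrix.mulVec, Fintype.sum_sum_type, Matrix.fromBlocks,
        Matrix.replicateRow, Matrix.replicateCol, Fintype.sum_unique]
      ring
    rw [hy]
    exact mul_nonneg hc (mul_self_nonneg _)
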